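/- Let (X,ℰ) and (Y,ℱ) be coarse spaces and let ℰ * ℱ be the product coarse structure on X × Y. If asdim(X,ℰ) ≤ n and asdim(Y,ℱ) ≤ m, then asdim(X × Y, ℰ * ℱ) ≤ n + m. Moreover, if Y ≠ ∅ and asdim(X × Y, ℰ * ℱ) ≤ n, then asdim(X,ℰ) ≤ n. -/

import Mathlib

/-- A coarse structure on a set `X`. -/
structure CoarseStruct (X : Type*) where
  IsEntourage : Set (X × X) → Prop
  subset_mem : ∀ ⦃E F : Set (X × X)⦄, IsEntourage F → E ⊆ F → IsEntourage E
  union_mem : ∀ ⦃E F : Set (X × X)⦄, IsEntourage E → IsEntourage F → IsEntourage (E ∪ F)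
  diagonal_mem : IsEntourage {p | p.1 = p.2}
  inv_mem : ∀ ⦃E : Set (X × X)⦄, IsEntourage E → IsEntourage {p | (p.2, p.1) ∈ E}
  comp_mem : ∀ ⦃E F : Set (X × X)⦄, IsEntourage E → IsEntourage F →
      IsEntourage {p | ∃ y, (p.1, y) ∈ E ∧ (y, p.2) ∈ F}

namespace CoarseStruct

variable {X Y : Type*}

/-- `f` is coarsely uniform if images of entourages are entourages. -/
def CoarselyUniform (ℰ : CoarseStruct X) (ℱ : CoarseStruct Y) (f : X → Y) : Prop :=
  ∀ ⦃E⦄, ℰ.IsEntourage E → ℱ.IsEntourage (Prod.map f f '' E)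

/-- `f` is a coarse embedding if it is coarsely uniform and preimages of entourages
are entourages. -/
def CoarseEmbedding (ℰ : CoarseStruct X) (ℱ : CoarseStruct Y) (f : X → Y) : Prop :=
  CoarselyUniform ℰ ℱ f ∧ ∀ ⦃F⦄, ℱ.IsEntourage F → ℰ.IsEntourage (Prod.map f f ⁻¹' F)

/-- Two maps into `X` are close if `{(f s, g s) : s ∈ S}` is an entourage. -/
def Close (ℰ : CoarseStruct X) {S : Type*} (f g : S → X) : Prop :=
  ℰ.IsEntourage (Set.range fun s => (f s, g s))

/-- A set is bounded if it is contained in `E(x)` for some entourage `E` and point `x`. -/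
def IsBounded (ℰ : CoarseStruct X) (B : Set X) : Prop :=
  ∃ E x, ℰ.IsEntourage E ∧ B ⊆ {y | (y, x) ∈ E}

/-- `f` is coarsely proper if preimages of bounded sets are bounded. -/
def CoarselyProper (ℰ : CoarseStruct X) (ℱ : CoarseStruct Y) (f : X → Y) : Prop :=
  ∀ ⦃B⦄, IsBounded ℱ B → IsBounded ℰ (f ⁻¹' B)

/-- A coarse map is coarsely uniform and coarsely proper. -/
def CoarseMap (ℰ : CoarseStruct X) (ℱ : CoarseStruct Y) (f : X → Y) : Prop :=
  CoarselyUniform ℰ ℱ f ∧ CoarselyProper ℰ ℱ f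

/-- A coarse equivalence is a coarse map with a coarse inverse up to closeness. -/
def CoarseEquivalence (ℰ : CoarseStruct X) (ℱ : CoarseStruct Y) (f : X → Y) : Prop :=
  CoarseMap ℰ ℱ f ∧ ∃ g : Y → X, CoarseMap ℱ ℰ g ∧
    Close ℰ (g ∘ f) id ∧ Close ℱ (f ∘ g) id

/-- `E(x) = {y : (y,x) ∈ E}`. -/
def ball (E : Set (X × X)) (x : X) : Set X := {y | (y, x) ∈ E}

/-- `𝒰` is a cover of `X`. -/
def IsCover (𝒰 : Set (Set X)) : Prop := ∀ x : X, ∃ U ∈ 𝒰, x ∈ U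

/-- `𝒰` is uniformly bounded if `⋃_{U ∈ 𝒰} U × U` is an entourage. -/
def UniformlyBounded (ℰ : CoarseStruct X) (𝒰 : Set (Set X)) : Prop :=
  ℰ.IsEntourage (⋃ U ∈ 𝒰, U ×ˢ U)

/-- `𝒰` has appetite `L` if every `L(x)` is contained in some member of `𝒰`. -/
def HasAppetite (𝒰 : Set (Set X)) (L : Set (X × X)) : Prop :=
  ∀ x : X, ∃ U ∈ 𝒰, ball L x ⊆ U

/-- The multiplicity of `𝒰` is at most `m`: at most `m` members of `𝒰` share a point. -/
def MultiplicityLE (𝒰 : Set (Set X)) (m : ℕ) : Prop :=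
  ∀ x : X, {U | U ∈ 𝒰 ∧ x ∈ U}.encard ≤ (m : ℕ∞)

/-- `asdim (X, ℰ) ≤ n`. -/
def AsdimLE (ℰ : CoarseStruct X) (n : ℕ) : Prop :=
  ∀ ⦃L⦄, ℰ.IsEntourage L → ∃ 𝒰 : Set (Set X),
    IsCover 𝒰 ∧ UniformlyBounded ℰ 𝒰 ∧ HasAppetite 𝒰 L ∧ MultiplicityLE 𝒰 (n + 1)

end CoarseStruct


namespace CoarseStruct

variable {X Y : Type*}

/-- The product coarse structure on `X × Y`: a set is an entourage iff its images
under both coordinate projections (applied to both components) are entourages. -/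
def prod (ℰ : CoarseStruct X) (ℱ : CoarseStruct Y) : CoarseStruct (X × Y) where
  IsEntourage E :=
    ℰ.IsEntourage ((fun p : (X × Y) × (X × Y) => (p.1.1, p.2.1)) '' E) ∧
    ℱ.IsEntourage ((fun p : (X × Y) × (X × Y) => (p.1.2, p.2.2)) '' E)
  subset_mem := by
    intro E F hF hEF
    exact ⟨ℰ.subset_mem hF.1 (Set.image_mono hEF), ℱ.subset_mem hF.2 (Set.image_mono hEF)⟩
  union_mem := by
    intro E F hE hF
    constructor
    · rw [Set.image_union]; exact ℰ.union_mem hE.1 hF.1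
    · rw [Set.image_union]; exact ℱ.union_mem hE.2 hF.2
  diagonal_mem := by
    constructor
    · refine ℰ.subset_mem ℰ.diagonal_mem ?_
      rintro p ⟨⟨a, b⟩, (h : a = b), rfl⟩
      exact congrArg Prod.fst h
    · refine ℱ.subset_mem ℱ.diagonal_mem ?_
      rintro p ⟨⟨a, b⟩, (h : a = b), rfl⟩
      exact congrArg Prod.snd h
  inv_mem := by
    intro E hE
    constructor
    · refine ℰ.subset_mem (ℰ.inv_mem hE.1) ?_
      rintro p ⟨⟨a, b⟩, hab, rfl⟩
      exact ⟨(b, a), hab, rfl⟩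
    · refine ℱ.subset_mem (ℱ.inv_mem hE.2) ?_
      rintro p ⟨⟨a, b⟩, hab, rfl⟩
      exact ⟨(b, a), hab, rfl⟩
  comp_mem := by
    intro E F hE hF
    constructor
    · refine ℰ.subset_mem (ℰ.comp_mem hE.1 hF.1) ?_
      rintro p ⟨⟨a, c⟩, ⟨b, h1, h2⟩, rfl⟩
      exact ⟨b.1, ⟨(a, b), h1, rfl⟩, ⟨(b, c), h2, rfl⟩⟩
    · refine ℱ.subset_mem (ℱ.comp_mem hE.2 hF.2) ?_
      rintro p ⟨⟨a, c⟩, ⟨b, h1, h2⟩, rfl⟩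
      exact ⟨b.2, ⟨(a, b), h1, rfl⟩, ⟨(b, c), h2, rfl⟩⟩

end CoarseStruct

namespace AsdimProdAux
open CoarseStruct Set

variable {X Y : Type*}

/-- Iterated composition of an entourage. -/
def cpow (A : Set (X × X)) : ℕ → Set (X × X)
  | 0 => {p | p.1 = p.2}
  | (k+1) => {p | ∃ y, (p.1, y) ∈ cpow A k ∧ (y, p.2) ∈ A}

lemma cpow_ent (ℰ : CoarseStruct X) {A : Set (X × X)} (hA : ℰ.IsEntourage A) :
    ∀ k, ℰ.IsEntourage (cpow A k)
  | 0 => ℰ.diagonal_mem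
  | (k+1) => ℰ.comp_mem (cpow_ent ℰ hA k) hA

lemma diag_mem_cpow {A : Set (X × X)} (hA : ∀ x : X, (x, x) ∈ A) :
    ∀ (k : ℕ) (x : X), (x, x) ∈ cpow A k
  | 0, _ => rfl
  | (k+1), x => ⟨x, diag_mem_cpow hA k x, hA x⟩

lemma cpow_mono {A : Set (X × X)} (hA : ∀ x : X, (x, x) ∈ A) {c c' : ℕ} (h : c ≤ c') :
    cpow A c ⊆ cpow A c' := by
  induction h with
  | refl => exact fun p hp => hp
  | step _ ih => exact fun p hp => ⟨p.2, ih hp, hA p.2⟩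

/-- The `c`-fold shrinking family: members of `𝒰` containing the `A^c`-ball of `x`. -/
def Sh (𝒰 : Set (Set X)) (A : Set (X × X)) (c : ℕ) (x : X) : Set (Set X) :=
  {U | U ∈ 𝒰 ∧ ball (cpow A c) x ⊆ U}

lemma Sh_anti {𝒰 : Set (Set X)} {A : Set (X × X)} (hA : ∀ x : X, (x, x) ∈ A)
    {c c' : ℕ} (h : c ≤ c') (x : X) : Sh 𝒰 A c' x ⊆ Sh 𝒰 A c x :=
  fun U hU => ⟨hU.1, fun z hz => hU.2 (cpow_mono hA h hz)⟩

lemma Sh_slide {𝒰 : Set (Set X)} {A : Set (X × X)} {c : ℕ} {x x' : X}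
    (hxx' : (x', x) ∈ A) : Sh 𝒰 A (c+1) x ⊆ Sh 𝒰 A c x' :=
  fun U hU => ⟨hU.1, fun z hz => hU.2 ⟨x', hz, hxx'⟩⟩

lemma Sh_subset {𝒰 : Set (Set X)} {A : Set (X × X)} (hA : ∀ x : X, (x, x) ∈ A)
    (c : ℕ) (x : X) : Sh 𝒰 A c x ⊆ {U | U ∈ 𝒰 ∧ x ∈ U} :=
  fun U hU => ⟨hU.1, hU.2 (diag_mem_cpow hA c x)⟩

/-- Symmetrization of an entourage, containing the diagonal. -/
def sym (E : Set (X × X)) : Set (X × X) := E ∪ {p | (p.2, p.1) ∈ E} ∪ {p | p.1 = p.2}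

lemma sym_ent (ℰ : CoarseStruct X) {E : Set (X × X)} (hE : ℰ.IsEntourage E) :
    ℰ.IsEntourage (sym E) :=
  ℰ.union_mem (ℰ.union_mem hE (ℰ.inv_mem hE)) ℰ.diagonal_mem

lemma sym_diag (E : Set (X × X)) (x : X) : (x, x) ∈ sym E := Or.inr rfl

lemma sym_symm {E : Set (X × X)} {a b : X} (h : (a, b) ∈ sym E) : (b, a) ∈ sym E := by
  rcases h with (h | h) | h
  · exact Or.inl (Or.inr h)
  · exact Or.inl (Or.inl h)
  · exact Or.inr ((show a = b from h).symm)

lemma subset_sym (E : Set (X × X)) : E ⊆ sym E := fun _ hp => Or.inl (Or.inl hp)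

lemma ncard_le_of_encard_le {α : Type*} {s : Set α} {k : ℕ} (h : s.encard ≤ (k : ℕ∞)) :
    s.ncard ≤ k := by
  rw [Set.ncard_def]
  have h2 : s.encard.toNat ≤ ((k : ℕ∞)).toNat := ENat.toNat_le_toNat h (by simp)
  simpa using h2

/-- If no pair of consecutive even-indexed values is stable, cardinalities drop too fast. -/
lemma exists_good {α β : Type*} (n m : ℕ) (P : ℕ → Set α) (Q : ℕ → Set β)
    (hPanti : ∀ {c c' : ℕ}, c ≤ c' → P c' ⊆ P c) (hQanti : ∀ {c c' : ℕ}, c ≤ c' → Q c' ⊆ Q c)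
    (hPfin : (P 0).Finite) (hQfin : (Q 0).Finite)
    (hP0 : (P 0).ncard ≤ n + 1) (hQ0 : (Q 0).ncard ≤ m + 1)
    (hPne : (P (2*(n+m)+2)).Nonempty) (hQne : (Q (2*(n+m)+2)).Nonempty) :
    ∃ i, i ≤ n + m ∧ P (2*i) = P (2*i+2) ∧ Q (2*i) = Q (2*i+2) := by
  by_contra hcon
  push_neg at hcon
  have hfinP : ∀ c, (P c).Finite := fun c => hPfin.subset (hPanti (Nat.zero_le c))
  have hfinQ : ∀ c, (Q c).Finite := fun c => hQfin.subset (hQanti (Nat.zero_le c))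
  have key : ∀ i, i ≤ n + m →
      (P (2*i+2)).ncard + (Q (2*i+2)).ncard + 1 ≤ (P (2*i)).ncard + (Q (2*i)).ncard := by
    intro i hi
    have hPQ := hcon i hi
    have hPsub : P (2*i+2) ⊆ P (2*i) := hPanti (by omega)
    have hQsub : Q (2*i+2) ⊆ Q (2*i) := hQanti (by omega)
    by_cases hP : P (2*i) = P (2*i+2)
    · have hQne' : Q (2*i) ≠ Q (2*i+2) := hPQ hP
      have h1 : (Q (2*i+2)).ncard < (Q (2*i)).ncard :=
        Set.ncard_lt_ncard (ssubset_of_subset_of_ne hQsub (fun h => hQne' h.symm)) (hfinQ _)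
      have h2 := Set.ncard_le_ncard hPsub (hfinP _)
      omega
    · have h1 : (P (2*i+2)).ncard < (P (2*i)).ncard :=
        Set.ncard_lt_ncard (ssubset_of_subset_of_ne hPsub (fun h => hP h.symm)) (hfinP _)
      have h2 := Set.ncard_le_ncard hQsub (hfinQ _)
      omega
  have main : ∀ j, j ≤ n + m + 1 →
      (P (2*j)).ncard + (Q (2*j)).ncard + j ≤ (P 0).ncard + (Q 0).ncard := by
    intro j
    induction j with
    | zero => intro _; simp
    | succ k ih =>
      intro hk
      have h1 := ih (by omega)
      have h2 := key k (by omega)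
      have h3 : 2*(k+1) = 2*k+2 := by ring
      rw [h3]
      omega
  have h1 := main (n+m+1) le_rfl
  have h4 : 2*(n+m+1) = 2*(n+m)+2 := by ring
  rw [h4] at h1
  have h5 : 1 ≤ (P (2*(n+m)+2)).ncard := (Set.ncard_pos (hfinP _)).mpr hPne
  have h6 : 1 ≤ (Q (2*(n+m)+2)).ncard := (Set.ncard_pos (hfinQ _)).mpr hQne
  omega

/-- A monotone chain of pairs of sets with bounded cardinalities has few distinct values. -/
lemma encard_pairs {α β : Type*} (n m : ℕ) (P : ℕ → Set α) (Q : ℕ → Set β)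
    (hPanti : ∀ {c c' : ℕ}, c ≤ c' → P c' ⊆ P c) (hQanti : ∀ {c c' : ℕ}, c ≤ c' → Q c' ⊆ Q c)
    (hPfin : (P 0).Finite) (hQfin : (Q 0).Finite)
    (hP0 : (P 0).ncard ≤ n + 1) (hQ0 : (Q 0).ncard ≤ m + 1)
    (hPne : (P (2*(n+m)+2)).Nonempty) (hQne : (Q (2*(n+m)+2)).Nonempty) :
    ((fun c => (P c, Q c)) '' (Set.Icc 1 (2*(n+m)+1))).encard ≤ ((n + m + 1 : ℕ) : ℕ∞) := by
  have hfinP : ∀ c, (P c).Finite := fun c => hPfin.subset (hPanti (Nat.zero_le c))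
  have hfinQ : ∀ c, (Q c).Finite := fun c => hQfin.subset (hQanti (Nat.zero_le c))
  have hcardP : ∀ c, (P c).ncard ≤ n + 1 :=
    fun c => le_trans (Set.ncard_le_ncard (hPanti (Nat.zero_le c)) hPfin) hP0
  have hcardQ : ∀ c, (Q c).ncard ≤ m + 1 :=
    fun c => le_trans (Set.ncard_le_ncard (hQanti (Nat.zero_le c)) hQfin) hQ0
  have hneP : ∀ c, c ≤ 2*(n+m)+2 → 1 ≤ (P c).ncard := by
    intro c hc
    exact (Set.ncard_pos (hfinP c)).mpr (hPne.mono (hPanti hc))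
  have hneQ : ∀ c, c ≤ 2*(n+m)+2 → 1 ≤ (Q c).ncard := by
    intro c hc
    exact (Set.ncard_pos (hfinQ c)).mpr (hQne.mono (hQanti hc))
  have hinj : Set.InjOn (fun pq : Set α × Set β => pq.1.ncard + pq.2.ncard)
      ((fun c => (P c, Q c)) '' (Set.Icc 1 (2*(n+m)+1))) := by
    intro a ha b hb h
    obtain ⟨c, hc, rfl⟩ := ha
    obtain ⟨c', hc', rfl⟩ := hb
    dsimp only at h ⊢
    rcases le_total c c' with hle | hle
    · have h1 : P c' ⊆ P c := hPanti hle
      have h2 : Q c' ⊆ Q c := hQanti hle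
      have e1 : (P c').ncard ≤ (P c).ncard := Set.ncard_le_ncard h1 (hfinP c)
      have e2 : (Q c').ncard ≤ (Q c).ncard := Set.ncard_le_ncard h2 (hfinQ c)
      have eP : P c' = P c := Set.eq_of_subset_of_ncard_le h1 (by omega) (hfinP c)
      have eQ : Q c' = Q c := Set.eq_of_subset_of_ncard_le h2 (by omega) (hfinQ c)
      rw [eP, eQ]
    · have h1 : P c ⊆ P c' := hPanti hle
      have h2 : Q c ⊆ Q c' := hQanti hle
      have e1 : (P c).ncard ≤ (P c').ncard := Set.ncard_le_ncard h1 (hfinP c')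
      have e2 : (Q c).ncard ≤ (Q c').ncard := Set.ncard_le_ncard h2 (hfinQ c')
      have eP : P c = P c' := Set.eq_of_subset_of_ncard_le h1 (by omega) (hfinP c')
      have eQ : Q c = Q c' := Set.eq_of_subset_of_ncard_le h2 (by omega) (hfinQ c')
      rw [eP, eQ]
  rw [← hinj.encard_image]
  have hsub : (fun pq : Set α × Set β => pq.1.ncard + pq.2.ncard) ''
      ((fun c => (P c, Q c)) '' (Set.Icc 1 (2*(n+m)+1))) ⊆ ↑(Finset.Icc 2 (n+m+2)) := by
    rintro k ⟨pq, ⟨c, hc, rfl⟩, rfl⟩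
    simp only [Finset.coe_Icc, Set.mem_Icc]
    have hc2 : c ≤ 2*(n+m)+2 := le_trans hc.2 (by omega)
    have := hneP c hc2
    have := hneQ c hc2
    have := hcardP c
    have := hcardQ c
    constructor <;> omega
  refine le_trans (Set.encard_le_encard hsub) ?_
  rw [Set.encard_coe_eq_coe_finsetCard, Nat.card_Icc]
  have : n + m + 2 + 1 - 2 = n + m + 1 := by omega
  rw [this]

end AsdimProdAux

open CoarseStruct AsdimProdAux in
/-- Asymptotic dimension of products:
`asdim (X × Y) ≤ asdim X + asdim Y`, and if `Y ≠ ∅` then `asdim X ≤ asdim (X × Y)`. -/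
theorem asdim_prod {X Y : Type*} (ℰ : CoarseStruct X) (ℱ : CoarseStruct Y) (n m : ℕ) :
    (AsdimLE ℰ n → AsdimLE ℱ m → AsdimLE (ℰ.prod ℱ) (n + m)) ∧
    (Nonempty Y → AsdimLE (ℰ.prod ℱ) n → AsdimLE ℰ n) := by
  constructor
  · -- product theorem
    intro hX hY L hL
    -- symmetrized projection entourages
    set A : Set (X × X) := sym ((fun p : (X × Y) × (X × Y) => (p.1.1, p.2.1)) '' L) with hAdef
    set B : Set (Y × Y) := sym ((fun p : (X × Y) × (X × Y) => (p.1.2, p.2.2)) '' L) with hBdef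
    have hAent : ℰ.IsEntourage A := sym_ent ℰ hL.1
    have hBent : ℱ.IsEntourage B := sym_ent ℱ hL.2
    have hAd : ∀ x : X, (x, x) ∈ A := fun x => sym_diag _ x
    have hBd : ∀ y : Y, (y, y) ∈ B := fun y => sym_diag _ y
    obtain ⟨𝒰, h𝒰cov, h𝒰bd, h𝒰app, h𝒰mult⟩ := hX (cpow_ent ℰ hAent (2*(n+m)+2))
    obtain ⟨𝒱, h𝒱cov, h𝒱bd, h𝒱app, h𝒱mult⟩ := hY (cpow_ent ℱ hBent (2*(n+m)+2))
    -- basic facts about the shrinking families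
    have hSne : ∀ (x : X) (c : ℕ), c ≤ 2*(n+m)+2 → (Sh 𝒰 A c x).Nonempty := by
      intro x c hc
      obtain ⟨U, hU1, hU2⟩ := h𝒰app x
      exact ⟨U, Sh_anti hAd hc x ⟨hU1, hU2⟩⟩
    have hTne : ∀ (y : Y) (c : ℕ), c ≤ 2*(n+m)+2 → (Sh 𝒱 B c y).Nonempty := by
      intro y c hc
      obtain ⟨V, hV1, hV2⟩ := h𝒱app y
      exact ⟨V, Sh_anti hBd hc y ⟨hV1, hV2⟩⟩
    have hUxfin : ∀ x : X, {U | U ∈ 𝒰 ∧ x ∈ U}.Finite :=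
      fun x => Set.finite_of_encard_le_coe (h𝒰mult x)
    have hVyfin : ∀ y : Y, {V | V ∈ 𝒱 ∧ y ∈ V}.Finite :=
      fun y => Set.finite_of_encard_le_coe (h𝒱mult y)
    have hSfin : ∀ (x : X) (c : ℕ), (Sh 𝒰 A c x).Finite :=
      fun x c => (hUxfin x).subset (Sh_subset hAd c x)
    have hTfin : ∀ (y : Y) (c : ℕ), (Sh 𝒱 B c y).Finite :=
      fun y c => (hVyfin y).subset (Sh_subset hBd c y)
    have hScard : ∀ (x : X) (c : ℕ), (Sh 𝒰 A c x).ncard ≤ n + 1 := by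
      intro x c
      exact le_trans (Set.ncard_le_ncard (Sh_subset hAd c x) (hUxfin x))
        (ncard_le_of_encard_le (h𝒰mult x))
    have hTcard : ∀ (y : Y) (c : ℕ), (Sh 𝒱 B c y).ncard ≤ m + 1 := by
      intro y c
      exact le_trans (Set.ncard_le_ncard (Sh_subset hBd c y) (hVyfin y))
        (ncard_le_of_encard_le (h𝒱mult y))
    -- the staircase cover
    set WW : Set (Set X) → Set (Set Y) → Set (X × Y) := fun P Q =>
      {z | ∃ c, 1 ≤ c ∧ c ≤ 2*(n+m)+1 ∧ Sh 𝒰 A c z.1 = P ∧ Sh 𝒱 B c z.2 = Q} with hWWdef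
    set 𝒲 : Set (Set (X × Y)) :=
      {W | ∃ P Q, P.Nonempty ∧ Q.Nonempty ∧ W = WW P Q} with h𝒲def
    refine ⟨𝒲, ?_, ?_, ?_, ?_⟩
    · -- cover
      intro z
      refine ⟨WW (Sh 𝒰 A 1 z.1) (Sh 𝒱 B 1 z.2),
        ⟨_, _, hSne z.1 1 (by omega), hTne z.2 1 (by omega), rfl⟩,
        ⟨1, le_rfl, by omega, rfl, rfl⟩⟩
    · -- uniformly bounded
      refine ⟨?_, ?_⟩
      · refine ℰ.subset_mem h𝒰bd ?_
        rintro p ⟨⟨z, z'⟩, hzz, rfl⟩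
        simp only [Set.mem_iUnion] at hzz
        obtain ⟨W, ⟨P, Q, hPne, hQne, rfl⟩, hz, hz'⟩ := hzz
        obtain ⟨c1, _, _, hS1, _⟩ := hz
        obtain ⟨c2, _, _, hS2, _⟩ := hz'
        obtain ⟨U, hU⟩ := hPne
        have hU1 : U ∈ Sh 𝒰 A c1 z.1 := by rw [hS1]; exact hU
        have hU2 : U ∈ Sh 𝒰 A c2 z'.1 := by rw [hS2]; exact hU
        exact Set.mem_biUnion hU1.1 ⟨hU1.2 (diag_mem_cpow hAd _ _), hU2.2 (diag_mem_cpow hAd _ _)⟩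
      · refine ℱ.subset_mem h𝒱bd ?_
        rintro p ⟨⟨z, z'⟩, hzz, rfl⟩
        simp only [Set.mem_iUnion] at hzz
        obtain ⟨W, ⟨P, Q, hPne, hQne, rfl⟩, hz, hz'⟩ := hzz
        obtain ⟨c1, _, _, _, hT1⟩ := hz
        obtain ⟨c2, _, _, _, hT2⟩ := hz'
        obtain ⟨V, hV⟩ := hQne
        have hV1 : V ∈ Sh 𝒱 B c1 z.2 := by rw [hT1]; exact hV
        have hV2 : V ∈ Sh 𝒱 B c2 z'.2 := by rw [hT2]; exact hV
        exact Set.mem_biUnion hV1.1 ⟨hV1.2 (diag_mem_cpow hBd _ _), hV2.2 (diag_mem_cpow hBd _ _)⟩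
    · -- appetite
      intro z
      obtain ⟨i, hi, hP, hQ⟩ := exists_good n m (fun c => Sh 𝒰 A c z.1) (fun c => Sh 𝒱 B c z.2)
        (fun h => Sh_anti hAd h z.1) (fun h => Sh_anti hBd h z.2)
        (hSfin z.1 0) (hTfin z.2 0) (hScard z.1 0) (hTcard z.2 0)
        (hSne z.1 _ le_rfl) (hTne z.2 _ le_rfl)
      have hP' : Sh 𝒰 A (2*i) z.1 = Sh 𝒰 A (2*i+2) z.1 := hP
      have hQ' : Sh 𝒱 B (2*i) z.2 = Sh 𝒱 B (2*i+2) z.2 := hQ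
      -- the middle level agrees with both ends
      have eP1 : Sh 𝒰 A (2*i+1) z.1 = Sh 𝒰 A (2*i) z.1 :=
        Set.Subset.antisymm (Sh_anti hAd (by omega) z.1)
          (fun U hU => Sh_anti hAd (by omega) z.1 (hP' ▸ hU))
      have eP2 : Sh 𝒰 A (2*i+2) z.1 = Sh 𝒰 A (2*i+1) z.1 :=
        Set.Subset.antisymm (Sh_anti hAd (by omega) z.1)
          (fun U hU => hP' ▸ (Sh_anti hAd (show 2*i ≤ 2*i+1 by omega) z.1 hU))
      have eQ1 : Sh 𝒱 B (2*i+1) z.2 = Sh 𝒱 B (2*i) z.2 :=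
        Set.Subset.antisymm (Sh_anti hBd (by omega) z.2)
          (fun V hV => Sh_anti hBd (by omega) z.2 (hQ' ▸ hV))
      have eQ2 : Sh 𝒱 B (2*i+2) z.2 = Sh 𝒱 B (2*i+1) z.2 :=
        Set.Subset.antisymm (Sh_anti hBd (by omega) z.2)
          (fun V hV => hQ' ▸ (Sh_anti hBd (show 2*i ≤ 2*i+1 by omega) z.2 hV))
      refine ⟨WW (Sh 𝒰 A (2*i+1) z.1) (Sh 𝒱 B (2*i+1) z.2),
        ⟨_, _, hSne z.1 _ (by omega), hTne z.2 _ (by omega), rfl⟩, ?_⟩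
      rintro ⟨x', y'⟩ hw
      -- hw : ((x', y'), z) ∈ L
      have hxA : (x', z.1) ∈ A := subset_sym _ ⟨((x', y'), z), hw, rfl⟩
      have hyB : (y', z.2) ∈ B := subset_sym _ ⟨((x', y'), z), hw, rfl⟩
      refine ⟨2*i+1, by omega, by omega, ?_, ?_⟩
      · apply Set.Subset.antisymm
        · intro U hU
          rw [eP1]
          exact Sh_slide (sym_symm hxA) hU
        · intro U hU
          rw [← eP2] at hU
          exact Sh_slide hxA hU
      · apply Set.Subset.antisymm
        · intro V hV
          rw [eQ1]
          exact Sh_slide (sym_symm hyB) hV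
        · intro V hV
          rw [← eQ2] at hV
          exact Sh_slide hyB hV
    · -- multiplicity
      intro z
      have hsub : {W | W ∈ 𝒲 ∧ z ∈ W} ⊆
          (fun pq : Set (Set X) × Set (Set Y) => WW pq.1 pq.2) ''
            ((fun c => (Sh 𝒰 A c z.1, Sh 𝒱 B c z.2)) '' (Set.Icc 1 (2*(n+m)+1))) := by
        rintro W ⟨⟨P, Q, _, _, rfl⟩, hzW⟩
        obtain ⟨c, hc1, hc2, h1, h2⟩ := hzW
        refine ⟨(P, Q), ⟨c, ⟨hc1, hc2⟩, ?_⟩, rfl⟩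
        dsimp only
        rw [h1, h2]
      refine le_trans (Set.encard_le_encard hsub) (le_trans (Set.encard_image_le _ _) ?_)
      exact encard_pairs n m (fun c => Sh 𝒰 A c z.1) (fun c => Sh 𝒱 B c z.2)
        (fun h => Sh_anti hAd h z.1) (fun h => Sh_anti hBd h z.2)
        (hSfin z.1 0) (hTfin z.2 0) (hScard z.1 0) (hTcard z.2 0)
        (hSne z.1 _ le_rfl) (hTne z.2 _ le_rfl)
  · -- restriction to a slice
    rintro ⟨y₀⟩ hXY L hL
    have hLtent : (ℰ.prod ℱ).IsEntourage
        {p : (X × Y) × (X × Y) | (p.1.1, p.2.1) ∈ L ∧ p.1.2 = y₀ ∧ p.2.2 = y₀} := by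
      refine ⟨?_, ?_⟩
      · refine ℰ.subset_mem hL ?_
        rintro q ⟨p, hp, rfl⟩
        exact hp.1
      · refine ℱ.subset_mem ℱ.diagonal_mem ?_
        rintro q ⟨p, hp, rfl⟩
        exact hp.2.1.trans hp.2.2.symm
    obtain ⟨𝒲, hcov, hbd, happ, hmult⟩ := hXY hLtent
    refine ⟨(fun W => {x | (x, y₀) ∈ W}) '' 𝒲, ?_, ?_, ?_, ?_⟩
    · intro x
      obtain ⟨W, hW, hxW⟩ := hcov (x, y₀)
      exact ⟨_, ⟨W, hW, rfl⟩, hxW⟩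
    · refine ℰ.subset_mem hbd.1 ?_
      rintro p hp
      simp only [Set.mem_iUnion] at hp
      obtain ⟨U, ⟨W, hW, rfl⟩, hpU⟩ := hp
      exact ⟨((p.1, y₀), (p.2, y₀)), Set.mem_biUnion hW ⟨hpU.1, hpU.2⟩, rfl⟩
    · intro x
      obtain ⟨W, hW, hball⟩ := happ (x, y₀)
      refine ⟨_, ⟨W, hW, rfl⟩, ?_⟩
      intro x' hx'
      exact hball ⟨hx', rfl, rfl⟩
    · intro x
      have hsub : {U | U ∈ (fun W => {x | (x, y₀) ∈ W}) '' 𝒲 ∧ x ∈ U} ⊆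
          (fun W => {x | (x, y₀) ∈ W}) '' {W | W ∈ 𝒲 ∧ (x, y₀) ∈ W} := by
        rintro U ⟨⟨W, hW, rfl⟩, hxU⟩
        exact ⟨W, ⟨hW, hxU⟩, rfl⟩
      exact le_trans (Set.encard_le_encard hsub)
        (le_trans (Set.encard_image_le _ _) (hmult (x, y₀)))
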